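/- Let d ≥ 1 be an integer, let p ≥ 1 be a real number, and let δ > 0. For a measurable function u on the unit ball B_1 ⊆ ℝ^d, define its reflection extension ũ on B_{3/2} by ũ(x) = u(x) for |x| < 1 and ũ(x) = u( (2 - |x|) x / |x| ) for 1 ≤ |x| < 3/2. Then I_{δ,p}(ũ, B_{3/2}) ≤ C I_{δ,p}(u, B_1), for some positive constant C depending only on d and p. -/

import Mathlib

open MeasureTheory Real Filter ENNReal NNReal Module

section reflAux

variable {d : ℕ}

/-- The radial reflection map across the unit sphere. -/
noncomputable def rho (x : EuclideanSpace ℝ (Fin d)) : EuclideanSpace ℝ (Fin d) :=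
  ((2 - ‖x‖) / ‖x‖) • x

/-- The extension map: identity on the unit ball, reflection outside. -/
noncomputable def Phi (x : EuclideanSpace ℝ (Fin d)) : EuclideanSpace ℝ (Fin d) :=
  if ‖x‖ < 1 then x else rho x

lemma rho_meas : Measurable (rho (d := d)) :=
  ((measurable_const.sub measurable_norm).div measurable_norm).smul measurable_id

lemma Phi_meas : Measurable (Phi (d := d)) := by
  apply Measurable.ite _ measurable_id rho_meas
  exact measurableSet_lt measurable_norm measurable_const

lemma norm_rho {x : EuclideanSpace ℝ (Fin d)} (h0 : x ≠ 0) (h2 : ‖x‖ ≤ 2) :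
    ‖rho x‖ = 2 - ‖x‖ := by
  have hx : 0 < ‖x‖ := norm_pos_iff.2 h0
  rw [rho, norm_smul, Real.norm_eq_abs, abs_div, abs_of_nonneg (by linarith), abs_of_pos hx]
  field_simp

lemma rho_rho {x : EuclideanSpace ℝ (Fin d)} (h0 : x ≠ 0) (h1 : ‖x‖ < 2) :
    rho (rho x) = x := by
  have hx : 0 < ‖x‖ := norm_pos_iff.2 h0
  rw [rho, norm_rho h0 h1.le, rho, smul_smul]
  have h2 : (0:ℝ) < 2 - ‖x‖ := by linarith
  rw [show (2 - (2 - ‖x‖)) = ‖x‖ by ring]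
  rw [div_mul_div_comm, mul_comm, div_self (by positivity), one_smul]

lemma unit_lip {E : Type*} [NormedAddCommGroup E] [NormedSpace ℝ E]
    {c : ℝ} (hc : 0 < c) {x y : E} (hx : c ≤ ‖x‖) (hy : c ≤ ‖y‖) :
    ‖‖x‖⁻¹ • x - ‖y‖⁻¹ • y‖ ≤ (2 / c) * ‖x - y‖ := by
  have hx0 : 0 < ‖x‖ := lt_of_lt_of_le hc hx
  have hy0 : 0 < ‖y‖ := lt_of_lt_of_le hc hy
  have key : ‖x‖⁻¹ • x - ‖y‖⁻¹ • y
      = ‖x‖⁻¹ • (x - y) + (‖x‖⁻¹ - ‖y‖⁻¹) • y := by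
    rw [smul_sub, sub_smul]; abel
  rw [key]
  have h1 : ‖‖x‖⁻¹ • (x - y)‖ = ‖x‖⁻¹ * ‖x - y‖ := by
    rw [norm_smul, Real.norm_eq_abs, abs_of_pos (by positivity)]
  have h2 : ‖(‖x‖⁻¹ - ‖y‖⁻¹) • y‖ ≤ ‖x‖⁻¹ * ‖x - y‖ := by
    rw [norm_smul, Real.norm_eq_abs]
    have : ‖x‖⁻¹ - ‖y‖⁻¹ = (‖y‖ - ‖x‖) / (‖x‖ * ‖y‖) := by field_simp
    rw [this, abs_div, abs_of_pos (show (0:ℝ) < ‖x‖ * ‖y‖ by positivity)]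
    have habs : |‖y‖ - ‖x‖| ≤ ‖x - y‖ := by
      rw [abs_sub_comm]; exact abs_norm_sub_norm_le x y
    calc |‖y‖ - ‖x‖| / (‖x‖ * ‖y‖) * ‖y‖ = |‖y‖ - ‖x‖| * ‖x‖⁻¹ := by field_simp
      _ ≤ ‖x - y‖ * ‖x‖⁻¹ := by
          apply mul_le_mul_of_nonneg_right habs (by positivity)
      _ = ‖x‖⁻¹ * ‖x - y‖ := mul_comm _ _
  calc ‖‖x‖⁻¹ • (x - y) + (‖x‖⁻¹ - ‖y‖⁻¹) • y‖
      ≤ ‖‖x‖⁻¹ • (x - y)‖ + ‖(‖x‖⁻¹ - ‖y‖⁻¹) • y‖ := norm_add_le _ _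
    _ ≤ ‖x‖⁻¹ * ‖x - y‖ + ‖x‖⁻¹ * ‖x - y‖ := by rw [h1]; exact add_le_add_right h2 _
    _ = (2 * ‖x‖⁻¹) * ‖x - y‖ := by ring
    _ ≤ (2 / c) * ‖x - y‖ := by
        apply mul_le_mul_of_nonneg_right _ (norm_nonneg _)
        rw [div_eq_mul_inv]
        exact mul_le_mul_of_nonneg_left (inv_anti₀ hc hx) (by norm_num)

lemma rho_eq {x : EuclideanSpace ℝ (Fin d)} (h0 : x ≠ 0) :
    rho x = (2:ℝ) • (‖x‖⁻¹ • x) - x := by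
  have hx : (0:ℝ) < ‖x‖ := norm_pos_iff.2 h0
  rw [rho, smul_smul,
    show ((2 - ‖x‖) / ‖x‖) = 2 * ‖x‖⁻¹ - 1 by field_simp,
    sub_smul, one_smul]

lemma rho_lip {x y : EuclideanSpace ℝ (Fin d)} (hx : (1:ℝ)/2 ≤ ‖x‖) (hy : (1:ℝ)/2 ≤ ‖y‖) :
    ‖rho x - rho y‖ ≤ 9 * ‖x - y‖ := by
  have hx0 : x ≠ 0 := by intro h; rw [h, norm_zero] at hx; linarith
  have hy0 : y ≠ 0 := by intro h; rw [h, norm_zero] at hy; linarith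
  rw [rho_eq hx0, rho_eq hy0]
  have key : (2:ℝ) • (‖x‖⁻¹ • x) - x - ((2:ℝ) • (‖y‖⁻¹ • y) - y)
      = (2:ℝ) • (‖x‖⁻¹ • x - ‖y‖⁻¹ • y) - (x - y) := by
    rw [smul_sub]; abel
  rw [key]
  have h1 := unit_lip (by norm_num : (0:ℝ) < 1/2) hx hy
  calc ‖(2:ℝ) • (‖x‖⁻¹ • x - ‖y‖⁻¹ • y) - (x - y)‖
      ≤ ‖(2:ℝ) • (‖x‖⁻¹ • x - ‖y‖⁻¹ • y)‖ + ‖x - y‖ := norm_sub_le _ _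
    _ = 2 * ‖‖x‖⁻¹ • x - ‖y‖⁻¹ • y‖ + ‖x - y‖ := by
        rw [norm_smul, Real.norm_eq_abs, abs_of_pos (by norm_num : (0:ℝ) < 2)]
    _ ≤ 2 * ((2 / (1/2)) * ‖x - y‖) + ‖x - y‖ := by
        have := mul_le_mul_of_nonneg_left h1 (by norm_num : (0:ℝ) ≤ 2)
        linarith
    _ = 9 * ‖x - y‖ := by ring

lemma rho_lipOn : LipschitzOnWith (9 : ℝ≥0) (rho (d := d))
    {y : EuclideanSpace ℝ (Fin d) | (1:ℝ)/2 ≤ ‖y‖} := by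
  rw [lipschitzOnWith_iff_dist_le_mul]
  intro x hx y hy
  rw [dist_eq_norm, dist_eq_norm]
  simpa using rho_lip hx hy

set_option maxHeartbeats 1000000 in
lemma rho_image_le {t : Set (EuclideanSpace ℝ (Fin d))}
    (ht : t ⊆ {y : EuclideanSpace ℝ (Fin d) | (1:ℝ)/2 ≤ ‖y‖}) :
    volume (rho '' t) ≤ (9:ℝ≥0∞) ^ (d:ℝ) * volume t := by
  have hlip : LipschitzOnWith (9 : ℝ≥0) (rho (d := d)) t := rho_lipOn.mono ht
  have hH := hlip.hausdorffMeasure_image_le (d := (d:ℝ)) (by positivity)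
  have hfr : finrank ℝ (EuclideanSpace ℝ (Fin d)) = d := finrank_euclideanSpace_fin
  set c := Measure.addHaarScalarFactor (volume : Measure (EuclideanSpace ℝ (Fin d)))
      μH[finrank ℝ (EuclideanSpace ℝ (Fin d))] with hc
  have hvol : (volume : Measure (EuclideanSpace ℝ (Fin d)))
      = c • μH[finrank ℝ (EuclideanSpace ℝ (Fin d))] :=
    Measure.isAddLeftInvariant_eq_smul _ _
  have e1 : volume (rho '' t) = (c:ℝ≥0∞) * μH[(d:ℝ)] (rho '' t) := by
    conv_lhs => rw [hvol]
    simp [hfr]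
  have e2 : volume t = (c:ℝ≥0∞) * μH[(d:ℝ)] t := by
    conv_lhs => rw [hvol]
    simp [hfr]
  rw [e1, e2]
  calc (c:ℝ≥0∞) * μH[(d:ℝ)] (rho '' t)
      ≤ (c:ℝ≥0∞) * ((9:ℝ≥0∞) ^ (d:ℝ) * μH[(d:ℝ)] t) :=
        mul_le_mul_right (by simpa using hH) _
    _ = (9:ℝ≥0∞) ^ (d:ℝ) * ((c:ℝ≥0∞) * μH[(d:ℝ)] t) := by ring

lemma dist_rho_self {y : EuclideanSpace ℝ (Fin d)} (hy : 1 ≤ ‖y‖) :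
    ‖y - rho y‖ = 2 * ‖y‖ - 2 := by
  have hy0 : (0:ℝ) < ‖y‖ := by linarith
  have : y - rho y = (1 - (2 - ‖y‖) / ‖y‖) • y := by
    rw [rho, sub_smul, one_smul]
  rw [this, norm_smul, Real.norm_eq_abs]
  have h1 : 1 - (2 - ‖y‖) / ‖y‖ = (2 * ‖y‖ - 2) / ‖y‖ := by field_simp; ring
  rw [h1, abs_div, abs_of_nonneg (by linarith), abs_of_pos hy0]
  field_simp

lemma mixed_lip {x y : EuclideanSpace ℝ (Fin d)} (hx : ‖x‖ < 1) (hy : 1 ≤ ‖y‖) :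
    ‖x - rho y‖ ≤ 3 * ‖x - y‖ := by
  have h1 : ‖y‖ - 1 ≤ ‖x - y‖ := by
    have := norm_sub_norm_le y x
    rw [norm_sub_rev]
    linarith
  calc ‖x - rho y‖ = ‖(x - y) + (y - rho y)‖ := by abel_nf
    _ ≤ ‖x - y‖ + ‖y - rho y‖ := norm_add_le _ _
    _ = ‖x - y‖ + (2 * ‖y‖ - 2) := by rw [dist_rho_self hy]
    _ ≤ ‖x - y‖ + 2 * ‖x - y‖ := by linarith
    _ = 3 * ‖x - y‖ := by ring

lemma Phi_lip (x y : EuclideanSpace ℝ (Fin d)) :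
    ‖Phi x - Phi y‖ ≤ 9 * ‖x - y‖ := by
  have hxy : (0:ℝ) ≤ ‖x - y‖ := norm_nonneg _
  rw [Phi, Phi]
  by_cases h1 : ‖x‖ < 1 <;> by_cases h2 : ‖y‖ < 1 <;> simp only [h1, h2, if_pos, if_neg,
    if_true, if_false]
  · linarith
  · push_neg at h2
    have := mixed_lip h1 h2
    linarith
  · push_neg at h1
    have := mixed_lip h2 h1
    have h3 : ‖y - x‖ = ‖x - y‖ := norm_sub_rev _ _
    rw [norm_sub_rev]
    linarith
  · push_neg at h1 h2
    exact rho_lip (by linarith) (by linarith)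

lemma Phi_map_le (hd : 1 ≤ d) :
    Measure.map Phi (volume.restrict (Metric.ball (0 : EuclideanSpace ℝ (Fin d)) (3/2)))
      ≤ (1 + (9:ℝ≥0∞) ^ (d:ℝ)) • volume.restrict (Metric.ball (0 : EuclideanSpace ℝ (Fin d)) 1) := by
  haveI : Nontrivial (EuclideanSpace ℝ (Fin d)) := by
    refine ⟨EuclideanSpace.single ⟨0, hd⟩ 1, 0, ?_⟩
    intro h
    have := congrArg (fun v => v ⟨0, hd⟩) h
    simpa [EuclideanSpace.single] using this
  rw [Measure.le_iff]
  intro s hs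
  rw [Measure.map_apply Phi_meas hs, Measure.restrict_apply (Phi_meas hs),
    Measure.smul_apply, Measure.restrict_apply hs, smul_eq_mul]
  set t := s ∩ (Metric.ball (0 : EuclideanSpace ℝ (Fin d)) 1
    \ Metric.closedBall (0 : EuclideanSpace ℝ (Fin d)) (1/2)) with hT
  have hsub : Phi ⁻¹' s ∩ Metric.ball (0 : EuclideanSpace ℝ (Fin d)) (3/2)
      ⊆ (s ∩ Metric.ball 0 1) ∪ Metric.sphere (0 : EuclideanSpace ℝ (Fin d)) 1 ∪ rho '' t := by
    rintro x ⟨hxs, hxb⟩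
    rw [Set.mem_preimage] at hxs
    rw [mem_ball_zero_iff] at hxb
    rcases lt_trichotomy ‖x‖ 1 with h1 | h1 | h1
    · left; left
      refine ⟨?_, mem_ball_zero_iff.2 h1⟩
      rwa [Phi, if_pos h1] at hxs
    · left; right
      simpa [mem_sphere_zero_iff_norm] using h1
    · right
      have hx0 : x ≠ 0 := by
        intro h; rw [h, norm_zero] at h1; linarith
      have hPhix : Phi x = rho x := by rw [Phi, if_neg (by linarith)]
      refine ⟨rho x, ⟨?_, ?_⟩, ?_⟩
      · rwa [hPhix] at hxs
      · constructor
        · rw [mem_ball_zero_iff, norm_rho hx0 (by linarith)]; linarith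
        · rw [Metric.mem_closedBall, dist_zero_right, norm_rho hx0 (by linarith)]
          push_neg; linarith
      · exact rho_rho hx0 (by linarith)
  have ht12 : t ⊆ {y : EuclideanSpace ℝ (Fin d) | (1:ℝ)/2 ≤ ‖y‖} := by
    rintro y ⟨_, _, hy2⟩
    rw [Metric.mem_closedBall, dist_zero_right] at hy2
    push_neg at hy2
    exact le_of_lt hy2
  calc volume (Phi ⁻¹' s ∩ Metric.ball (0 : EuclideanSpace ℝ (Fin d)) (3/2))
      ≤ volume ((s ∩ Metric.ball 0 1) ∪ Metric.sphere (0 : EuclideanSpace ℝ (Fin d)) 1 ∪ rho '' t) :=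
        measure_mono hsub
    _ ≤ volume ((s ∩ Metric.ball 0 1) ∪ Metric.sphere (0 : EuclideanSpace ℝ (Fin d)) 1)
        + volume (rho '' t) := measure_union_le _ _
    _ ≤ volume (s ∩ Metric.ball 0 1) + volume (Metric.sphere (0 : EuclideanSpace ℝ (Fin d)) 1)
        + volume (rho '' t) := by
          exact add_le_add_left (measure_union_le _ _) _
    _ = volume (s ∩ Metric.ball 0 1) + volume (rho '' t) := by
          rw [Measure.addHaar_sphere, add_zero]
    _ ≤ volume (s ∩ Metric.ball 0 1) + (9:ℝ≥0∞) ^ (d:ℝ) * volume t :=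
          add_le_add_right (rho_image_le ht12) _
    _ ≤ volume (s ∩ Metric.ball 0 1) + (9:ℝ≥0∞) ^ (d:ℝ) * volume (s ∩ Metric.ball 0 1) := by
          refine add_le_add_right (mul_le_mul_right (measure_mono ?_) _) _
          rintro y ⟨hy1, hy2, _⟩
          exact ⟨hy1, hy2⟩
    _ = (1 + (9:ℝ≥0∞) ^ (d:ℝ)) * volume (s ∩ Metric.ball 0 1) := by ring

end reflAux

noncomputable def nlI (d : ℕ) (p δ : ℝ) (u : EuclideanSpace ℝ (Fin d) → ℝ)
    (O : Set (EuclideanSpace ℝ (Fin d))) : ℝ≥0∞ :=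
  ∫⁻ x in O, ∫⁻ y in O,
    (if δ < |u x - u y| then ENNReal.ofReal (δ ^ p / ‖x - y‖ ^ ((d : ℝ) + p)) else 0)

/-- the reflection extension controls the nonlocal energy. -/
theorem stmt11 (d : ℕ) (hd : 1 ≤ d) (p : ℝ) (hp : 1 ≤ p) :
    ∃ C : ℝ, 0 < C ∧ ∀ δ : ℝ, 0 < δ →
      ∀ u : EuclideanSpace ℝ (Fin d) → ℝ, Measurable u →
      nlI d p δ (fun x => if ‖x‖ < 1 then u x else u (((2 - ‖x‖) / ‖x‖) • x))
          (Metric.ball (0 : EuclideanSpace ℝ (Fin d)) (3 / 2)) ≤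
        ENNReal.ofReal C * nlI d p δ u (Metric.ball (0 : EuclideanSpace ℝ (Fin d)) 1) := by
  refine ⟨9 ^ ((d:ℝ) + p) * ((1 + 9 ^ (d:ℝ)) * (1 + 9 ^ (d:ℝ))), by positivity, ?_⟩
  intro δ hδ u hu
  set B32 := Metric.ball (0 : EuclideanSpace ℝ (Fin d)) (3/2) with hB32
  set B1 := Metric.ball (0 : EuclideanSpace ℝ (Fin d)) 1 with hB1
  set q : ℝ := (d : ℝ) + p with hq
  have hq0 : (0:ℝ) < q := by
    have : (1:ℝ) ≤ (d:ℝ) := by exact_mod_cast hd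
    simp only [hq]; linarith
  set G : EuclideanSpace ℝ (Fin d) × EuclideanSpace ℝ (Fin d) → ℝ≥0∞ :=
    fun z => if δ < |u z.1 - u z.2| then ENNReal.ofReal (δ ^ p / ‖z.1 - z.2‖ ^ q) else 0 with hG
  have hGmeas : Measurable G := by
    apply Measurable.ite
    · exact measurableSet_lt measurable_const
        ((hu.comp measurable_fst).sub (hu.comp measurable_snd)).abs
    · exact ENNReal.measurable_ofReal.comp
        (measurable_const.div ((measurable_fst.sub measurable_snd).norm.pow measurable_const))
    · exact measurable_const
  set K : ℝ≥0∞ := ENNReal.ofReal (9 ^ q) with hK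
  set c₁ : ℝ≥0∞ := 1 + (9:ℝ≥0∞) ^ (d:ℝ) with hc₁
  have hc₁eq : c₁ = ENNReal.ofReal (1 + 9 ^ (d:ℝ)) := by
    rw [ENNReal.ofReal_add (by norm_num) (by positivity), ENNReal.ofReal_one,
      ← ENNReal.ofReal_rpow_of_pos (by norm_num : (0:ℝ) < 9), ENNReal.ofReal_ofNat, hc₁]
  have hc₁top : c₁ ≠ ∞ := by rw [hc₁eq]; exact ENNReal.ofReal_ne_top
  have hueq : (fun x => if ‖x‖ < 1 then u x else u (((2 - ‖x‖) / ‖x‖) • x))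
      = fun x => u (Phi x) := by
    funext x
    by_cases h : ‖x‖ < 1 <;> simp [Phi, rho, h]
  -- pointwise bound
  have hpt : ∀ x y : EuclideanSpace ℝ (Fin d),
      (if δ < |u (Phi x) - u (Phi y)| then ENNReal.ofReal (δ ^ p / ‖x - y‖ ^ q) else 0)
        ≤ K * G (Phi x, Phi y) := by
    intro x y
    by_cases h : δ < |u (Phi x) - u (Phi y)|
    · rw [if_pos h]
      simp only [hG]
      rw [if_pos h, hK, ← ENNReal.ofReal_mul (by positivity)]
      apply ENNReal.ofReal_le_ofReal
      have hne : Phi x ≠ Phi y := by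
        intro he
        rw [he, sub_self, abs_zero] at h
        linarith
      have hpos : (0:ℝ) < ‖Phi x - Phi y‖ := by
        rw [norm_pos_iff, sub_ne_zero]; exact hne
      have h9 := Phi_lip x y
      have hxy : (0:ℝ) < ‖x - y‖ := by nlinarith
      have hA : (0:ℝ) < ‖x - y‖ ^ q := rpow_pos_of_pos hxy q
      have hB : (0:ℝ) < ‖Phi x - Phi y‖ ^ q := rpow_pos_of_pos hpos q
      have hBA : ‖Phi x - Phi y‖ ^ q ≤ 9 ^ q * ‖x - y‖ ^ q := by
        calc ‖Phi x - Phi y‖ ^ q ≤ (9 * ‖x - y‖) ^ q :=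
              Real.rpow_le_rpow (norm_nonneg _) h9 hq0.le
          _ = 9 ^ q * ‖x - y‖ ^ q := Real.mul_rpow (by norm_num) (norm_nonneg _)
      rw [mul_div_assoc', div_le_div_iff₀ hA hB]
      have hδp : (0:ℝ) < δ ^ p := rpow_pos_of_pos hδ p
      calc δ ^ p * ‖Phi x - Phi y‖ ^ q ≤ δ ^ p * (9 ^ q * ‖x - y‖ ^ q) :=
            mul_le_mul_of_nonneg_left hBA hδp.le
        _ = 9 ^ q * δ ^ p * ‖x - y‖ ^ q := by ring
    · rw [if_neg h]
      exact zero_le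
  -- the pushforward measure
  set ν := Measure.map Phi (volume.restrict B32) with hν
  have hνle : ν ≤ c₁ • volume.restrict B1 := Phi_map_le hd
  set H : EuclideanSpace ℝ (Fin d) → ℝ≥0∞ := fun a => ∫⁻ b in B1, G (a, b) with hH
  have hHmeas : Measurable H := hGmeas.lintegral_prod_right'
  have hin : ∀ x : EuclideanSpace ℝ (Fin d),
      (∫⁻ y in B32, G (Phi x, Phi y)) ≤ c₁ * H (Phi x) := by
    intro x
    calc (∫⁻ y in B32, G (Phi x, Phi y))
        = ∫⁻ b, G (Phi x, b) ∂ν :=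
          (lintegral_map (hGmeas.comp measurable_prodMk_left) Phi_meas).symm
      _ ≤ ∫⁻ b, G (Phi x, b) ∂(c₁ • volume.restrict B1) := lintegral_mono' hνle le_rfl
      _ = c₁ * H (Phi x) := by rw [lintegral_smul_measure, smul_eq_mul]
  have hKtop : K ≠ ∞ := ENNReal.ofReal_ne_top
  have hKc₁top : K * c₁ ≠ ∞ := ENNReal.mul_ne_top hKtop hc₁top
  have main : nlI d p δ (fun x => u (Phi x)) B32 ≤ K * c₁ * c₁ * nlI d p δ u B1 := by
    calc nlI d p δ (fun x => u (Phi x)) B32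
        = ∫⁻ x in B32, ∫⁻ y in B32,
            (if δ < |u (Phi x) - u (Phi y)| then ENNReal.ofReal (δ ^ p / ‖x - y‖ ^ q) else 0) := rfl
      _ ≤ ∫⁻ x in B32, ∫⁻ y in B32, K * G (Phi x, Phi y) :=
          lintegral_mono fun x => lintegral_mono fun y => hpt x y
      _ = ∫⁻ x in B32, K * ∫⁻ y in B32, G (Phi x, Phi y) :=
          lintegral_congr fun x => lintegral_const_mul' _ _ hKtop
      _ ≤ ∫⁻ x in B32, K * (c₁ * H (Phi x)) :=
          lintegral_mono fun x => mul_le_mul_right (hin x) K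
      _ = ∫⁻ x in B32, (K * c₁) * H (Phi x) := by
          apply lintegral_congr fun x => by rw [mul_assoc]
      _ = (K * c₁) * ∫⁻ x in B32, H (Phi x) := lintegral_const_mul' _ _ hKc₁top
      _ = (K * c₁) * ∫⁻ a, H a ∂ν := by rw [lintegral_map hHmeas Phi_meas]
      _ ≤ (K * c₁) * ∫⁻ a, H a ∂(c₁ • volume.restrict B1) :=
          mul_le_mul_right (lintegral_mono' hνle le_rfl) _
      _ = (K * c₁) * (c₁ * ∫⁻ a in B1, H a) := by rw [lintegral_smul_measure, smul_eq_mul]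
      _ = K * c₁ * c₁ * nlI d p δ u B1 := by
          rw [mul_assoc (K * c₁)]
          rfl
  rw [hueq]
  refine main.trans (le_of_eq ?_)
  congr 1
  rw [hc₁eq, hK, ← ENNReal.ofReal_mul (by positivity), ← ENNReal.ofReal_mul (by positivity)]
  congr 1
  ring
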